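/- Let k ≥ 2, n ≥ 1, and ε > 0 with ε·n > 1, and set ε₀ := ln(ε·n). Then for any two datasets X, X' ∈ [k]^n differing in at most one coordinate and every outcome y ∈ [k], the output probabilities of the subsampled randomized response mechanism satisfy ((1/n)·∑_i RR(X_i)(y)) ≤ e^{ε} · ((1/n)·∑_i RR(X'_i)(y)), i.e., the mechanism satisfies ε-differential privacy; indeed the likelihood ratio is at most 1 + e^{ε₀}/n = 1 + ε ≤ e^{ε}. -/

import Mathlib

open Finset

/-- `ε₀`-randomized response over `[k]`. -/
noncomputable def RR (k : ℕ) (ε₀ : ℝ) (x y : Fin k) : ℝ :=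
  if y = x then Real.exp ε₀ / ((k : ℝ) - 1 + Real.exp ε₀)
  else 1 / ((k : ℝ) - 1 + Real.exp ε₀)

/-- With `ε₀ := ln(ε n)` (for `ε n > 1`), the subsampled
randomized response mechanism is `ε`-differentially private: on neighboring
datasets its output probabilities satisfy a pointwise `e^ε` likelihood bound;
indeed the likelihood ratio is at most `1 + e^{ε₀}/n = 1 + ε ≤ e^ε`. -/
theorem subsampled_RR_pure_DP
    (k n : ℕ) (hk : 2 ≤ k) (hn : 1 ≤ n) (ε : ℝ) (hε : 0 < ε)
    (hεn : 1 < ε * (n : ℝ)) (ε₀ : ℝ) (hε₀ : ε₀ = Real.log (ε * (n : ℝ)))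
    (X X' : Fin n → Fin k) (j : Fin n)
    (hneighbor : ∀ i, i ≠ j → X i = X' i)
    (y : Fin k) :
    (1 / (n : ℝ)) * ∑ i, RR k ε₀ (X i) y
      ≤ Real.exp ε * ((1 / (n : ℝ)) * ∑ i, RR k ε₀ (X' i) y)
    ∧ 1 + Real.exp ε₀ / (n : ℝ) = 1 + ε
    ∧ 1 + ε ≤ Real.exp ε := by
  have hn' : (1:ℝ) ≤ (n:ℝ) := by exact_mod_cast hn
  have hnpos : (0:ℝ) < (n:ℝ) := by linarith
  have hexp : Real.exp ε₀ = ε * (n:ℝ) := by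
    rw [hε₀, Real.exp_log (by linarith)]
  have hexp1 : (1:ℝ) ≤ Real.exp ε₀ := by rw [hexp]; linarith
  have hk' : (2:ℝ) ≤ (k:ℝ) := by exact_mod_cast hk
  set D := (k:ℝ) - 1 + Real.exp ε₀ with hDdef
  have hD : (0:ℝ) < D := by
    have := Real.exp_pos ε₀; simp only [hDdef]; linarith
  have hRRle : ∀ x : Fin k, RR k ε₀ x y ≤ Real.exp ε₀ / D := by
    intro x; unfold RR; rw [← hDdef]
    split
    · exact le_rfl
    · gcongr
  have hRRge : ∀ x : Fin k, 1 / D ≤ RR k ε₀ x y := by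
    intro x; unfold RR; rw [← hDdef]
    split
    · gcongr
    · exact le_rfl
  have he : 1 + ε ≤ Real.exp ε := by linarith [Real.add_one_le_exp ε]
  -- split the sums at j
  have hsplit : ∀ Z : Fin n → Fin k,
      ∑ i, RR k ε₀ (Z i) y
        = RR k ε₀ (Z j) y + ∑ i ∈ Finset.univ.erase j, RR k ε₀ (Z i) y :=
    fun Z => (Finset.add_sum_erase _ _ (Finset.mem_univ j)).symm
  have heq : ∑ i ∈ Finset.univ.erase j, RR k ε₀ (X i) y
      = ∑ i ∈ Finset.univ.erase j, RR k ε₀ (X' i) y :=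
    Finset.sum_congr rfl fun i hi => by
      rw [hneighbor i (Finset.ne_of_mem_erase hi)]
  set S := ∑ i ∈ Finset.univ.erase j, RR k ε₀ (X' i) y with hSdef
  have hScard : (Finset.univ.erase j).card = n - 1 := by
    rw [Finset.card_erase_of_mem (Finset.mem_univ j), Finset.card_univ, Fintype.card_fin]
  have hS : ((n:ℝ) - 1) * (1 / D) ≤ S := by
    have h := Finset.card_nsmul_le_sum (Finset.univ.erase j)
      (fun i => RR k ε₀ (X' i) y) (1 / D) (fun i _ => hRRge _)
    rw [hScard, nsmul_eq_mul] at h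
    have : ((n - 1 : ℕ) : ℝ) = (n:ℝ) - 1 := by
      rw [Nat.cast_sub hn]; simp
    rwa [this] at h
  have hB : (n:ℝ) / D ≤ ∑ i, RR k ε₀ (X' i) y := by
    rw [hsplit X']
    have := hRRge (X' j)
    have hlin : (n:ℝ)/D = 1/D + ((n:ℝ)-1)*(1/D) := by field_simp; ring
    linarith
  have hA : ∑ i, RR k ε₀ (X i) y ≤ Real.exp ε₀ / D + S := by
    rw [hsplit X, heq]
    linarith [hRRle (X j)]
  have hBnonneg : 0 ≤ ∑ i, RR k ε₀ (X' i) y := by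
    have : 0 < (n:ℝ)/D := by positivity
    linarith
  have key : ∑ i, RR k ε₀ (X i) y ≤ Real.exp ε * ∑ i, RR k ε₀ (X' i) y := by
    have h1 : ∑ i, RR k ε₀ (X i) y ≤ (1 + ε) * ∑ i, RR k ε₀ (X' i) y := by
      have hε1 : ε * ((n:ℝ)/D) ≤ ε * ∑ i, RR k ε₀ (X' i) y :=
        mul_le_mul_of_nonneg_left hB hε.le
      have hB' : ∑ i, RR k ε₀ (X' i) y = RR k ε₀ (X' j) y + S := hsplit X'
      have h2 : ∑ i, RR k ε₀ (X i) y - ∑ i, RR k ε₀ (X' i) y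
          ≤ (Real.exp ε₀ - 1) / D := by
        rw [hB']; have := hRRge (X' j)
        have : (Real.exp ε₀ - 1)/D = Real.exp ε₀/D - 1/D := by ring
        linarith [hRRge (X' j)]
      have h3 : (Real.exp ε₀ - 1)/D ≤ ε * ((n:ℝ)/D) := by
        rw [hexp]
        rw [div_le_iff₀ hD]
        field_simp; linarith
      nlinarith
    calc ∑ i, RR k ε₀ (X i) y ≤ (1 + ε) * ∑ i, RR k ε₀ (X' i) y := h1
      _ ≤ Real.exp ε * ∑ i, RR k ε₀ (X' i) y :=
        mul_le_mul_of_nonneg_right he hBnonneg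
  refine ⟨?_, by rw [hexp]; field_simp, he⟩
  calc (1/(n:ℝ)) * ∑ i, RR k ε₀ (X i) y
      ≤ (1/(n:ℝ)) * (Real.exp ε * ∑ i, RR k ε₀ (X' i) y) := by
        apply mul_le_mul_of_nonneg_left key; positivity
    _ = Real.exp ε * ((1/(n:ℝ)) * ∑ i, RR k ε₀ (X' i) y) := by ring
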